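/- For d odd and n = 2, the global momentum state |P_G; dλ⟩ equals the local momentum state |P_L; λ, 0⟩ for every λ with -(d-1)/2 ≤ λ ≤ (d-1)/2. -/

import Mathlib

open Matrix

/-- `ω m a = exp(2πi a / m)` for `a : ZMod m`. -/
noncomputable def ω (m : ℕ) (a : ZMod m) : ℂ :=
  Complex.exp (2 * (Real.pi : ℂ) * Complex.I * (a.val : ℂ) / (m : ℂ))

/-- The finite Fourier transform matrix `F_{jk} = ω_d(jk)/√d`. -/
noncomputable def Fmat (d : ℕ) [NeZero d] : Matrix (ZMod d) (ZMod d) ℂ :=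
  fun j k => (1 / (Real.sqrt d : ℂ)) * ω d (j * k)


/-- The symmetric-interval representative of `x : ZMod d`, lying in `[-(d-1)/2, (d-1)/2]`
for odd `d`. -/
def valMin (d : ℕ) (x : ZMod d) : ℤ :=
  if (x.val : ℤ) ≤ ((d : ℤ) - 1) / 2 then (x.val : ℤ) else (x.val : ℤ) - d

/-- The map `(j₀,...,j_{n-1}) ↦ j₀ + j₁ d + ... + j_{n-1} d^{n-1} (mod dⁿ)`,
using symmetric representatives. -/
def encMap (d n : ℕ) [NeZero d] (j : Fin n → ZMod d) : ZMod (d ^ n) :=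
  ((∑ r : Fin n, valMin d (j r) * (d : ℤ) ^ (r : ℕ) : ℤ) : ZMod (d ^ n))

/-- The local Fourier transform `F_L = F ⊗ ... ⊗ F` on the n-fold tensor basis. -/
noncomputable def FLmat (d n : ℕ) [NeZero d] :
    Matrix (Fin n → ZMod d) (Fin n → ZMod d) ℂ :=
  fun j k => ∏ r : Fin n, Fmat d (j r) (k r)

lemma omega_intCast (m : ℕ) [NeZero m] (z : ℤ) :
    ω m ((z : ZMod m)) = Complex.exp (2 * (Real.pi : ℂ) * Complex.I * (z : ℂ) / m) := by
  have hm : (m : ℂ) ≠ 0 := Nat.cast_ne_zero.mpr (NeZero.ne m)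
  unfold ω
  rw [Complex.exp_eq_exp_iff_exists_int]
  refine ⟨-(z / m), ?_⟩
  have hv : (((z : ZMod m).val : ℤ)) = z % m := ZMod.val_intCast z
  have hz : z % m = z - m * (z / m) := by
    have := Int.emod_add_mul_ediv z m; linarith
  have : (((z : ZMod m).val : ℂ)) = (z : ℂ) - (m : ℂ) * ((z / m : ℤ) : ℂ) := by
    rw [← Int.cast_natCast, hv, hz]; push_cast; ring
  rw [this]; field_simp; push_cast; ring

lemma valMin_cast (d : ℕ) [NeZero d] (y : ZMod d) : ((valMin d y : ℤ) : ZMod d) = y := by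
  unfold valMin
  split
  · simp [ZMod.natCast_val, ZMod.cast_id]
  · push_cast
    simp [ZMod.natCast_val, ZMod.cast_id, ZMod.natCast_self]

/-- For n = 2, `|P_G; dλ⟩ = |P_L; λ, 0⟩` for all λ in `[-(d-1)/2, (d-1)/2]` (d odd). -/
theorem stmt12 (d : ℕ) [NeZero d] [NeZero (d ^ 2)] (hd : Odd d) :
    ∀ l : ℤ, -(((d : ℤ) - 1) / 2) ≤ l → l ≤ ((d : ℤ) - 1) / 2 →
      ∀ x : Fin 2 → ZMod d,
        (Fmat (d ^ 2)).mulVec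
            (Pi.single ((d : ZMod (d ^ 2)) * (l : ZMod (d ^ 2))) 1 : ZMod (d ^ 2) → ℂ)
            (encMap d 2 x) =
          (FLmat d 2).mulVec
            (Pi.single (fun r : Fin 2 => if (r : ℕ) = 0 then (l : ZMod d) else 0) 1 :
              (Fin 2 → ZMod d) → ℂ) x := by
  intro l _ _ x
  have hd0 : (d : ℂ) ≠ 0 := Nat.cast_ne_zero.mpr (NeZero.ne d)
  have hdR : (0 : ℝ) ≤ (d : ℝ) := Nat.cast_nonneg d
  have hs0 : (Real.sqrt d : ℂ) ≠ 0 :=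
    Complex.ofReal_ne_zero.mpr (Real.sqrt_ne_zero'.mpr
      (by exact_mod_cast Nat.pos_of_ne_zero (NeZero.ne d)))
  rw [Matrix.mulVec_single, Matrix.mulVec_single]
  simp only [mul_one, FLmat, Fin.prod_univ_two, Pi.smul_apply, MulOpposite.op_one, one_smul, Matrix.col_apply]
  set a := valMin d (x 0) with ha
  set b := valMin d (x 1) with hb
  have henc : encMap d 2 x = ((a + b * d : ℤ) : ZMod (d ^ 2)) := by
    simp [encMap, Fin.sum_univ_two, ← ha, ← hb]
  have harg : encMap d 2 x * ((d : ZMod (d ^ 2)) * (l : ZMod (d ^ 2)))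
      = (((a + b * d) * (d * l) : ℤ) : ZMod (d ^ 2)) := by
    rw [henc]; push_cast; ring
  have hx0 : x 0 * ((l : ZMod d)) = ((a * l : ℤ) : ZMod d) := by
    rw [← valMin_cast d (x 0), ← ha]; push_cast; ring
  simp only [Fmat, harg]
  rw [show ((0 : Fin 2) : ℕ) = 0 from rfl, show ((1 : Fin 2) : ℕ) = 1 from rfl]
  simp only [eq_self_iff_true, if_true, if_neg (by norm_num : (1:ℕ) ≠ 0), mul_zero, hx0]
  rw [omega_intCast, omega_intCast]
  have hω0 : ω d 0 = 1 := by simp [ω]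
  rw [hω0]
  have hsq : (Real.sqrt ((d:ℕ)^2 : ℕ) : ℂ) = (Real.sqrt d) * (Real.sqrt d) := by
    have h : Real.sqrt ((d:ℝ)^2) = Real.sqrt d * Real.sqrt d := by
      rw [Real.sqrt_sq hdR, Real.mul_self_sqrt hdR]
    push_cast
    exact_mod_cast h
  rw [Complex.exp_eq_exp_iff_exists_int.mpr ⟨b * l, ?_⟩]
  · rw [hsq]; field_simp
  · push_cast
    field_simp
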